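/- Let B, ψ be as above, A a maximal abelian *-subalgebra with σ₁(A) ⊆ A and σ₂(A) ⊆ A, φ : A → ℂ a unital algebra homomorphism extended to a positive contraction on B, and D = φ₁(A) ⊆ Mₙ. Then φ_m(A) ⊆ D^{⊗m} for all m ≥ 1. -/

import Mathlib

/-- A bundled complex algebra. -/
structure CAlgBundle where
  carrier : Type
  ring : Ring carrier
  alg : Algebra ℂ carrier

attribute [instance] CAlgBundle.ring CAlgBundle.alg

/-- The iterated tensor powers `Mₙ^{⊗m} ⊗ B`, nested as
`T 0 = B`, `T (m+1) = Mₙ ⊗ T m`. -/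
noncomputable def tensorTower (n : ℕ) (B : Type) [Ring B] [Algebra ℂ B] : ℕ → CAlgBundle
  | 0 => ⟨B, inferInstance, inferInstance⟩
  | m + 1 => ⟨TensorProduct ℂ (Matrix (Fin n) (Fin n) ℂ) (tensorTower n B m).carrier,
      inferInstance, inferInstance⟩

/-- `id^{⊗m} ⊗ ψ : T m ≃ T (m+1)`. -/
noncomputable def tensorStep (n : ℕ) (B : Type) [Ring B] [Algebra ℂ B]
    (ψ : B ≃ₐ[ℂ] TensorProduct ℂ (Matrix (Fin n) (Fin n) ℂ) B) :
    ∀ m : ℕ, (tensorTower n B m).carrier ≃ₐ[ℂ] (tensorTower n B (m + 1)).carrier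
  | 0 => ψ
  | m + 1 => Algebra.TensorProduct.congr AlgEquiv.refl (tensorStep n B ψ m)

/-- The iterated isomorphism `ψ_m : B ≃ Mₙ^{⊗m} ⊗ B`, with `ψ₀ = id` and
`ψ_{m+1} = (id^{⊗m} ⊗ ψ) ∘ ψ_m`. -/
noncomputable def psiIter (n : ℕ) (B : Type) [Ring B] [Algebra ℂ B]
    (ψ : B ≃ₐ[ℂ] TensorProduct ℂ (Matrix (Fin n) (Fin n) ℂ) B) :
    ∀ m : ℕ, B ≃ₐ[ℂ] (tensorTower n B m).carrier
  | 0 => AlgEquiv.refl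
  | m + 1 => (psiIter n B ψ m).trans (tensorStep n B ψ m)

/-- The subalgebra `Mₙ^{⊗m} ⊗ A` of `T m`. -/
noncomputable def tensorSub (n : ℕ) (B : Type) [Ring B] [Algebra ℂ B]
    (A : Subalgebra ℂ B) : ∀ m : ℕ, Subalgebra ℂ (tensorTower n B m).carrier
  | 0 => A
  | m + 1 => (Algebra.TensorProduct.map (AlgHom.id ℂ (Matrix (Fin n) (Fin n) ℂ))
      (tensorSub n B A m).val).range

/-- The tensor powers `Mₙ^{⊗m}` (with a trailing `ℂ` factor), nested as
`T' 0 = ℂ`, `T' (m+1) = Mₙ ⊗ T' m`. -/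
noncomputable def matTower (n : ℕ) : ℕ → CAlgBundle
  | 0 => ⟨ℂ, inferInstance, inferInstance⟩
  | m + 1 => ⟨TensorProduct ℂ (Matrix (Fin n) (Fin n) ℂ) (matTower n m).carrier,
      inferInstance, inferInstance⟩

/-- The embedding `Mₙ^{⊗m} → Mₙ^{⊗m} ⊗ B`, `x ↦ x ⊗ 1`. -/
noncomputable def matIncl (n : ℕ) (B : Type) [Ring B] [Algebra ℂ B] :
    ∀ m : ℕ, (matTower n m).carrier →ₐ[ℂ] (tensorTower n B m).carrier
  | 0 => Algebra.ofId ℂ B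
  | m + 1 => Algebra.TensorProduct.map (AlgHom.id ℂ (Matrix (Fin n) (Fin n) ℂ))
      (matIncl n B m)

/-- The map `id^{⊗m} ⊗ φ : Mₙ^{⊗m} ⊗ B → Mₙ^{⊗m}` induced by a functional
`φ : B → ℂ`. -/
noncomputable def phiSlice (n : ℕ) (B : Type) [Ring B] [Algebra ℂ B]
    (φ : B →ₗ[ℂ] ℂ) : ∀ m : ℕ, (tensorTower n B m).carrier →ₗ[ℂ] (matTower n m).carrier
  | 0 => φ
  | m + 1 => TensorProduct.map LinearMap.id (phiSlice n B φ m)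


/-- The map `id^{⊗m} ⊗ f : Mₙ^{⊗m} ⊗ B → Mₙ^{⊗m+1} ⊗ B` with `f(b) = Iₙ ⊗ b`. -/
noncomputable def shiftStep (n : ℕ) (B : Type) [Ring B] [Algebra ℂ B] :
    ∀ m : ℕ, (tensorTower n B m).carrier →ₐ[ℂ] (tensorTower n B (m + 1)).carrier
  | 0 => Algebra.TensorProduct.includeRight
  | m + 1 => Algebra.TensorProduct.map (AlgHom.id ℂ (Matrix (Fin n) (Fin n) ℂ))
      (shiftStep n B m)

/-- The shift `σ_{m+1} = ψ_{m+1}⁻¹ ∘ (id^{⊗m} ⊗ f) ∘ ψ_m : B → B`. -/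
noncomputable def shiftMap (n : ℕ) (B : Type) [Ring B] [Algebra ℂ B]
    (ψ : B ≃ₐ[ℂ] TensorProduct ℂ (Matrix (Fin n) (Fin n) ℂ) B) (m : ℕ) (b : B) : B :=
  (psiIter n B ψ (m + 1)).symm (shiftStep n B m (psiIter n B ψ m b))

/-- The subspaces `D^{⊗m}` of `Mₙ^{⊗m}` for a subspace `D ⊆ Mₙ`. -/
noncomputable def diagPow (n : ℕ) (D : Submodule ℂ (Matrix (Fin n) (Fin n) ℂ)) :
    ∀ m : ℕ, Submodule ℂ (matTower n m).carrier
  | 0 => ⊤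
  | m + 1 => LinearMap.range (TensorProduct.map D.subtype (diagPow n D m).subtype)



open TensorProduct LinearMap
set_option synthInstance.maxHeartbeats 1000000
set_option maxHeartbeats 2000000

instance tensorRightDistrib {V W : Type*} [Ring V] [Ring W] [Algebra ℂ V] [Algebra ℂ W] :
    RightDistribClass (TensorProduct ℂ V W) := ⟨Distrib.right_distrib⟩

instance tensorLeftDistrib {V W : Type*} [Ring V] [Ring W] [Algebra ℂ V] [Algebra ℂ W] :
    LeftDistribClass (TensorProduct ℂ V W) := ⟨Distrib.left_distrib⟩

noncomputable def entrySlice (n : ℕ) {N : Type*} [AddCommGroup N] [Module ℂ N] (k l : Fin n) :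
    TensorProduct ℂ (Matrix (Fin n) (Fin n) ℂ) N →ₗ[ℂ] N :=
  (TensorProduct.lid ℂ N).toLinearMap ∘ₗ LinearMap.rTensor N (Matrix.entryLinearMap ℂ ℂ k l)

@[simp] lemma entrySlice_tmul (n : ℕ) {N : Type*} [AddCommGroup N] [Module ℂ N] (k l : Fin n)
    (x : Matrix (Fin n) (Fin n) ℂ) (v : N) :
    entrySlice n k l (x ⊗ₜ[ℂ] v) = x k l • v := by
  simp [entrySlice, Matrix.entryLinearMap]
  rfl

lemma sum_entrySlice (n : ℕ) {N : Type*} [AddCommGroup N] [Module ℂ N]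
    (z : TensorProduct ℂ (Matrix (Fin n) (Fin n) ℂ) N) :
    ∑ k : Fin n, ∑ l : Fin n,
      (Matrix.single k l (1:ℂ)) ⊗ₜ[ℂ] entrySlice n k l z = z := by
  induction z using TensorProduct.induction_on with
  | zero => simp
  | tmul x v =>
      simp only [entrySlice_tmul]
      calc ∑ k : Fin n, ∑ l : Fin n, Matrix.single k l (1:ℂ) ⊗ₜ[ℂ] (x k l • v)
          = ∑ k : Fin n, ∑ l : Fin n, (Matrix.single k l (x k l)) ⊗ₜ[ℂ] v := by
            refine Finset.sum_congr rfl fun k _ => Finset.sum_congr rfl fun l _ => ?_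
            rw [tmul_smul, smul_tmul', Matrix.smul_single, smul_eq_mul, mul_one]
        _ = (∑ k : Fin n, ∑ l : Fin n, Matrix.single k l (x k l)) ⊗ₜ[ℂ] v := by
            rw [sum_tmul]; exact Finset.sum_congr rfl fun k _ => (sum_tmul _ _ _).symm
        _ = x ⊗ₜ[ℂ] v := by rw [← Matrix.matrix_eq_sum_single]
  | add z w hz hw => simp only [map_add, tmul_add, Finset.sum_add_distrib, hz, hw]

noncomputable def mslice (n : ℕ) {N : Type*} [AddCommGroup N] [Module ℂ N] (k l : Fin n) :
    TensorProduct ℂ (Matrix (Fin n) (Fin n) ℂ)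
      (TensorProduct ℂ (Matrix (Fin n) (Fin n) ℂ) N) →ₗ[ℂ]
    TensorProduct ℂ (Matrix (Fin n) (Fin n) ℂ) N :=
  LinearMap.lTensor _ (entrySlice n k l)

@[simp] lemma mslice_tmul (n : ℕ) {N : Type*} [AddCommGroup N] [Module ℂ N] (k l : Fin n)
    (x : Matrix (Fin n) (Fin n) ℂ) (v : TensorProduct ℂ (Matrix (Fin n) (Fin n) ℂ) N) :
    mslice n k l (x ⊗ₜ[ℂ] v) = x ⊗ₜ[ℂ] entrySlice n k l v := rfl

variable (n : ℕ) {C : Type*} [Ring C] [Algebra ℂ C]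

noncomputable def midMap : TensorProduct ℂ (Matrix (Fin n) (Fin n) ℂ) C →ₐ[ℂ]
    TensorProduct ℂ (Matrix (Fin n) (Fin n) ℂ)
      (TensorProduct ℂ (Matrix (Fin n) (Fin n) ℂ) C) :=
  Algebra.TensorProduct.map (AlgHom.id ℂ (Matrix (Fin n) (Fin n) ℂ))
    Algebra.TensorProduct.includeRight

@[simp] lemma midMap_tmul (x : Matrix (Fin n) (Fin n) ℂ) (b : C) :
    midMap n (x ⊗ₜ[ℂ] b) = x ⊗ₜ[ℂ] ((1 : Matrix (Fin n) (Fin n) ℂ) ⊗ₜ[ℂ] b) := rfl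

lemma entrySlice_mul_right (k l : Fin n) (z : TensorProduct ℂ (Matrix (Fin n) (Fin n) ℂ) C)
    (b : C) : entrySlice n k l (z * ((1 : Matrix (Fin n) (Fin n) ℂ) ⊗ₜ[ℂ] b))
      = entrySlice n k l z * b := by
  induction z using TensorProduct.induction_on with
  | zero => simp
  | tmul x c => simp [Algebra.TensorProduct.tmul_mul_tmul, smul_mul_assoc]
  | add z w hz hw => simp only [add_mul, map_add, hz, hw]

lemma entrySlice_mul_left (k l : Fin n) (z : TensorProduct ℂ (Matrix (Fin n) (Fin n) ℂ) C)
    (b : C) : entrySlice n k l (((1 : Matrix (Fin n) (Fin n) ℂ) ⊗ₜ[ℂ] b) * z)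
      = b * entrySlice n k l z := by
  induction z using TensorProduct.induction_on with
  | zero => simp
  | tmul x c => simp [Algebra.TensorProduct.tmul_mul_tmul, mul_smul_comm]
  | add z w hz hw => simp only [mul_add, map_add, hz, hw]

lemma mslice_mul_right (k l : Fin n)
    (z : TensorProduct ℂ (Matrix (Fin n) (Fin n) ℂ)
        (TensorProduct ℂ (Matrix (Fin n) (Fin n) ℂ) C))
    (w : TensorProduct ℂ (Matrix (Fin n) (Fin n) ℂ) C) :
    mslice n k l (z * midMap n w) = mslice n k l z * w := by
  have hpure : ∀ (x' : Matrix (Fin n) (Fin n) ℂ) (b' : C) z,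
      mslice n k l (z * midMap n (x' ⊗ₜ[ℂ] b')) = mslice n k l z * (x' ⊗ₜ[ℂ] b') := by
    intro x' b' z
    have h : (mslice n k l) ∘ₗ (LinearMap.mulRight ℂ (midMap n (x' ⊗ₜ[ℂ] b')))
        = (LinearMap.mulRight ℂ (x' ⊗ₜ[ℂ] b')) ∘ₗ mslice n k l := by
      apply TensorProduct.ext'
      intro x v
      simp only [LinearMap.comp_apply, LinearMap.mulRight_apply, mslice_tmul, midMap_tmul,
        Algebra.TensorProduct.tmul_mul_tmul]
      rw [entrySlice_mul_right]
    exact congrFun (congrArg (fun (f : _ →ₗ[ℂ] _) => (f : _ → _)) h) z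
  have h2 : (mslice n k l) ∘ₗ (LinearMap.mulLeft ℂ z) ∘ₗ (midMap n).toLinearMap
      = LinearMap.mulLeft ℂ (mslice n k l z) := by
    apply TensorProduct.ext'
    intro x' b'
    simp only [LinearMap.comp_apply, LinearMap.mulLeft_apply, AlgHom.toLinearMap_apply]
    exact hpure x' b' z
  exact congrFun (congrArg (fun (f : _ →ₗ[ℂ] _) => (f : _ → _)) h2) w

lemma mslice_mul_left (k l : Fin n)
    (z : TensorProduct ℂ (Matrix (Fin n) (Fin n) ℂ)
        (TensorProduct ℂ (Matrix (Fin n) (Fin n) ℂ) C))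
    (w : TensorProduct ℂ (Matrix (Fin n) (Fin n) ℂ) C) :
    mslice n k l (midMap n w * z) = w * mslice n k l z := by
  have hpure : ∀ (x' : Matrix (Fin n) (Fin n) ℂ) (b' : C) z,
      mslice n k l (midMap n (x' ⊗ₜ[ℂ] b') * z) = (x' ⊗ₜ[ℂ] b') * mslice n k l z := by
    intro x' b' z
    have h : (mslice n k l) ∘ₗ (LinearMap.mulLeft ℂ (midMap n (x' ⊗ₜ[ℂ] b')))
        = (LinearMap.mulLeft ℂ (x' ⊗ₜ[ℂ] b')) ∘ₗ mslice n k l := by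
      apply TensorProduct.ext'
      intro x v
      simp only [LinearMap.comp_apply, LinearMap.mulLeft_apply, mslice_tmul, midMap_tmul,
        Algebra.TensorProduct.tmul_mul_tmul]
      rw [entrySlice_mul_left]
    exact congrFun (congrArg (fun (f : _ →ₗ[ℂ] _) => (f : _ → _)) h) z
  have h2 : (mslice n k l) ∘ₗ (LinearMap.mulRight ℂ z) ∘ₗ (midMap n).toLinearMap
      = LinearMap.mulRight ℂ (mslice n k l z) := by
    apply TensorProduct.ext'
    intro x' b'
    simp only [LinearMap.comp_apply, LinearMap.mulRight_apply, AlgHom.toLinearMap_apply]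
    exact hpure x' b' z
  exact congrFun (congrArg (fun (f : _ →ₗ[ℂ] _) => (f : _ → _)) h2) w

section PsiLemmas

variable (n : ℕ) (B : Type) [Ring B] [Algebra ℂ B]
  (ψ : B ≃ₐ[ℂ] TensorProduct ℂ (Matrix (Fin n) (Fin n) ℂ) B)

lemma psiIter_one (b : B) : psiIter n B ψ 1 b = ψ b := by
  simp [psiIter, tensorStep]
  rfl

lemma psiIter_succ (m : ℕ) (b : B) :
    psiIter n B ψ (m + 1) b
      = TensorProduct.map LinearMap.id (psiIter n B ψ m).toLinearMap (ψ b) := by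
  induction m with
  | zero =>
      rw [psiIter_one]
      show ψ b = _
      exact (LinearMap.congr_fun (TensorProduct.map_id (R := ℂ) (M := Matrix (Fin n) (Fin n) ℂ)
        (N := B)) (ψ b)).symm
  | succ m ih =>
      show tensorStep n B ψ (m + 1) (psiIter n B ψ (m + 1) b) = _
      rw [ih]
      show Algebra.TensorProduct.congr AlgEquiv.refl (tensorStep n B ψ m) _ = _
      generalize ψ b = z
      induction z using TensorProduct.induction_on with
      | zero => simp
      | tmul x c =>
          rw [TensorProduct.map_tmul, TensorProduct.map_tmul,
            Algebra.TensorProduct.congr_apply, Algebra.TensorProduct.map_tmul]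
          rfl
      | add z w hz hw => rw [map_add, map_add, map_add, hz, hw]

lemma psiIter_succ_L (m : ℕ) :
    (psiIter n B ψ (m + 1)).toLinearMap
      = (TensorProduct.map LinearMap.id (psiIter n B ψ m).toLinearMap) ∘ₗ ψ.toLinearMap :=
  LinearMap.ext fun b => psiIter_succ n B ψ m b

lemma psiIter_one_L : (psiIter n B ψ 1).toLinearMap = ψ.toLinearMap :=
  LinearMap.ext fun b => psiIter_one n B ψ b

lemma psiIter_two (b : B) :
    psiIter n B ψ 2 b = TensorProduct.map LinearMap.id ψ.toLinearMap (ψ b) := by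
  rw [psiIter_succ]
  rw [psiIter_one_L]
  rfl

lemma phiPsi_succ (φ : B →ₗ[ℂ] ℂ) (m : ℕ) (b : B) :
    phiSlice n B φ (m + 1) (psiIter n B ψ (m + 1) b)
      = TensorProduct.map LinearMap.id
          ((phiSlice n B φ m) ∘ₗ (psiIter n B ψ m).toLinearMap) (ψ b) := by
  rw [psiIter_succ]
  show TensorProduct.map LinearMap.id (phiSlice n B φ m) _ = _
  rw [← LinearMap.comp_apply, ← TensorProduct.map_comp, LinearMap.id_comp]

lemma sigma1_eq (a : B) :
    ψ (shiftMap n B ψ 0 a) = (1 : Matrix (Fin n) (Fin n) ℂ) ⊗ₜ[ℂ] a := by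
  have h := psiIter_one n B ψ (shiftMap n B ψ 0 a)
  rw [← h, shiftMap, AlgEquiv.apply_symm_apply]
  rfl

lemma sigma2_eq (a : B) :
    psiIter n B ψ 2 (shiftMap n B ψ 1 a) = midMap n (ψ a) := by
  rw [shiftMap, AlgEquiv.apply_symm_apply, psiIter_one]
  rfl

noncomputable def psiTwo : B →ₐ[ℂ] TensorProduct ℂ (Matrix (Fin n) (Fin n) ℂ)
    (TensorProduct ℂ (Matrix (Fin n) (Fin n) ℂ) B) :=
  (Algebra.TensorProduct.map (AlgHom.id ℂ (Matrix (Fin n) (Fin n) ℂ)) ψ.toAlgHom).comp ψ.toAlgHom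

lemma psiTwo_apply (b : B) : psiTwo n B ψ b = psiIter n B ψ 2 b := by
  rw [psiIter_two]
  show Algebra.TensorProduct.map (AlgHom.id ℂ (Matrix (Fin n) (Fin n) ℂ)) ψ.toAlgHom (ψ b)
    = TensorProduct.map LinearMap.id ψ.toLinearMap (ψ b)
  generalize ψ b = z
  induction z using TensorProduct.induction_on with
  | zero => simp
  | tmul x c => rfl
  | add z w hz hw => rw [map_add, map_add, hz, hw]

lemma psiTwo_linear (b : B) :
    psiTwo n B ψ b = TensorProduct.map LinearMap.id ψ.toLinearMap (ψ b) :=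
  (psiTwo_apply n B ψ b).trans (psiIter_two n B ψ b)

lemma psiTwo_sigma2 (a : B) :
    psiTwo n B ψ (shiftMap n B ψ 1 a) = midMap n (ψ a) := by
  rw [psiTwo_apply, sigma2_eq]

end PsiLemmas

section InsLemmas

variable (n : ℕ) {N N' : Type*} [AddCommGroup N] [Module ℂ N] [AddCommGroup N'] [Module ℂ N']

lemma sum_mslice (z : TensorProduct ℂ (Matrix (Fin n) (Fin n) ℂ)
    (TensorProduct ℂ (Matrix (Fin n) (Fin n) ℂ) N)) :
    ∑ k : Fin n, ∑ l : Fin n,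
      (LinearMap.lTensor (Matrix (Fin n) (Fin n) ℂ)
        ((TensorProduct.mk ℂ (Matrix (Fin n) (Fin n) ℂ) N) (Matrix.single k l (1:ℂ))))
        (mslice n k l z) = z := by
  induction z using TensorProduct.induction_on with
  | zero => simp
  | tmul x v =>
      have : ∀ k l : Fin n,
          (LinearMap.lTensor (Matrix (Fin n) (Fin n) ℂ)
            ((TensorProduct.mk ℂ (Matrix (Fin n) (Fin n) ℂ) N) (Matrix.single k l (1:ℂ))))
            (mslice n k l (x ⊗ₜ[ℂ] v))
          = x ⊗ₜ[ℂ] ((Matrix.single k l (1:ℂ)) ⊗ₜ[ℂ] entrySlice n k l v) := by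
        intro k l; rfl
      simp only [this]
      conv_rhs => rw [← sum_entrySlice n v]
      rw [TensorProduct.tmul_sum]
      refine Finset.sum_congr rfl fun k _ => ?_
      rw [TensorProduct.tmul_sum]
  | add z w hz hw => simp only [map_add, Finset.sum_add_distrib, hz, hw]

lemma ins_natural (F : N →ₗ[ℂ] N') (E : Matrix (Fin n) (Fin n) ℂ)
    (v : TensorProduct ℂ (Matrix (Fin n) (Fin n) ℂ) N) :
    TensorProduct.map LinearMap.id (TensorProduct.map LinearMap.id F)
        ((LinearMap.lTensor (Matrix (Fin n) (Fin n) ℂ)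
          ((TensorProduct.mk ℂ (Matrix (Fin n) (Fin n) ℂ) N) E)) v)
      = (LinearMap.lTensor (Matrix (Fin n) (Fin n) ℂ)
          ((TensorProduct.mk ℂ (Matrix (Fin n) (Fin n) ℂ) N') E))
          (TensorProduct.map LinearMap.id F v) := by
  induction v using TensorProduct.induction_on with
  | zero => simp
  | tmul x u => rfl
  | add v w hv hw => simp only [map_add, hv, hw]

lemma ins_mem_range {V : Type*} [AddCommGroup V] [Module ℂ V]
    (p : Submodule ℂ V) (q : Submodule ℂ N) (f : N →ₗ[ℂ] N')
    (x : TensorProduct ℂ V N)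
    (hx : x ∈ LinearMap.range (TensorProduct.map p.subtype q.subtype)) :
    LinearMap.lTensor V f x
      ∈ LinearMap.range (TensorProduct.map p.subtype (⊤ : Submodule ℂ N').subtype) := by
  obtain ⟨u, rfl⟩ := hx
  refine ⟨TensorProduct.map LinearMap.id
    (LinearMap.codRestrict ⊤ (f ∘ₗ q.subtype) fun _ => Submodule.mem_top) u, ?_⟩
  rw [← LinearMap.comp_apply, ← TensorProduct.map_comp, LinearMap.subtype_comp_codRestrict,
    LinearMap.comp_id]
  rw [show LinearMap.lTensor V f = TensorProduct.map LinearMap.id f from rfl,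
    ← LinearMap.comp_apply, ← TensorProduct.map_comp, LinearMap.id_comp]


end InsLemmas




lemma inter_range_lemma {V W : Type*} [AddCommGroup V] [Module ℂ V]
    [AddCommGroup W] [Module ℂ W] (p : Submodule ℂ V) (q : Submodule ℂ W)
    (x : TensorProduct ℂ V W)
    (h1 : x ∈ LinearMap.range (TensorProduct.map p.subtype (⊤ : Submodule ℂ W).subtype))
    (h2 : x ∈ LinearMap.range (TensorProduct.map (⊤ : Submodule ℂ V).subtype q.subtype)) :
    x ∈ LinearMap.range (TensorProduct.map p.subtype q.subtype) := by
  obtain ⟨p', hp⟩ := Submodule.exists_isCompl p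
  obtain ⟨q', hq⟩ := Submodule.exists_isCompl q
  set πp : V →ₗ[ℂ] V := p.subtype ∘ₗ (p.projectionOnto p' hp) with hπp
  set πq : W →ₗ[ℂ] W := q.subtype ∘ₗ (q.projectionOnto q' hq) with hπq
  obtain ⟨u, hu⟩ := h1
  obtain ⟨v, hv⟩ := h2
  have hps : πp ∘ₗ p.subtype = p.subtype := by
    ext y; simp [hπp, Submodule.projectionOnto_apply_left]
  have hqs : πq ∘ₗ q.subtype = q.subtype := by
    ext y; simp [hπq, Submodule.projectionOnto_apply_left]
  have hx1 : rTensor W πp x = x := by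
    rw [← hu, ← LinearMap.comp_apply, rTensor, ← TensorProduct.map_comp, hps, LinearMap.id_comp]
  have hx2 : lTensor V πq x = x := by
    rw [← hv, ← LinearMap.comp_apply, lTensor, ← TensorProduct.map_comp, hqs, LinearMap.id_comp]
  have hx : TensorProduct.map πp πq x = x := by
    rw [← LinearMap.rTensor_comp_lTensor, LinearMap.comp_apply, hx2, hx1]
  refine ⟨TensorProduct.map (p.projectionOnto p' hp) (q.projectionOnto q' hq) x, ?_⟩
  rw [← LinearMap.comp_apply, ← TensorProduct.map_comp, ← hπp, ← hπq, hx]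

open scoped ComplexOrder in
/-- Corollary 3.8: if the maximal abelian *-subalgebra `A` is invariant under
both shifts `σ₁` and `σ₂`, and `φ : B → ℂ` is a positive unital contraction
restricting to an algebra homomorphism on `A`, with `D = φ₁(A) ⊆ Mₙ`, then
`φ_m(A) ⊆ D^{⊗m}` for every `m ≥ 1`. -/
theorem phiSlice_maps_into_diagPow (n : ℕ) (B : Type) [CStarAlgebra B]
    (ψ : B ≃ₐ[ℂ] TensorProduct ℂ (Matrix (Fin n) (Fin n) ℂ) B)
    (A : Subalgebra ℂ B)
    (hstar : ∀ a ∈ A, star a ∈ A)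
    (hab : ∀ a ∈ A, ∀ a' ∈ A, a * a' = a' * a)
    (hmaxab : ∀ b : B, (∀ a ∈ A, a * b = b * a) → b ∈ A)
    (hshift1 : ∀ a ∈ A, shiftMap n B ψ 0 a ∈ A)
    (hshift2 : ∀ a ∈ A, shiftMap n B ψ 1 a ∈ A)
    (φ : B →ₗ[ℂ] ℂ)
    (hφ1 : φ 1 = 1)
    (hφc : ∀ b : B, ‖φ b‖ ≤ ‖b‖)
    (hφpos : ∀ b : B, 0 ≤ φ (star b * b))
    (hφmul : ∀ a ∈ A, ∀ a' ∈ A, φ (a * a') = φ a * φ a')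
    (D : Submodule ℂ (Matrix (Fin n) (Fin n) ℂ))
    (hD : D = Submodule.map
      ((TensorProduct.rid ℂ (Matrix (Fin n) (Fin n) ℂ)).toLinearMap ∘ₗ
        ((phiSlice n B φ 1) ∘ₗ (psiIter n B ψ 1).toLinearMap))
      (Subalgebra.toSubmodule A)) :
    ∀ m : ℕ, 1 ≤ m → ∀ a ∈ A,
      phiSlice n B φ m (psiIter n B ψ m a) ∈ diagPow n D m := by
  classical
  have hsliceA : ∀ a ∈ A, ∀ k l : Fin n, entrySlice n k l (ψ a) ∈ A := by
    intro a ha k l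
    apply hmaxab
    intro a' ha'
    have hcomm : a * shiftMap n B ψ 0 a' = shiftMap n B ψ 0 a' * a :=
      hab a ha _ (hshift1 a' ha')
    have hψ := congrArg ψ hcomm
    rw [map_mul, map_mul, sigma1_eq] at hψ
    have h1 := entrySlice_mul_right n k l (ψ a) a'
    have h2 := entrySlice_mul_left n k l (ψ a) a'
    rw [← h2, ← hψ, h1]
  have hmsliceA : ∀ a ∈ A, ∀ k l : Fin n,
      ψ.symm (mslice n k l (psiTwo n B ψ a)) ∈ A := by
    intro a ha k l
    apply hmaxab
    intro a' ha'
    have hcomm : a * shiftMap n B ψ 1 a' = shiftMap n B ψ 1 a' * a :=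
      hab a ha _ (hshift2 a' ha')
    have h := congrArg (psiTwo n B ψ) hcomm
    rw [map_mul, map_mul, psiTwo_sigma2] at h
    have hc : mslice n k l (psiTwo n B ψ a) * ψ a'
        = ψ a' * mslice n k l (psiTwo n B ψ a) := by
      rw [← mslice_mul_right n k l (psiTwo n B ψ a) (ψ a'), h,
        mslice_mul_left n k l (psiTwo n B ψ a) (ψ a')]
    apply ψ.injective
    rw [map_mul, map_mul, AlgEquiv.apply_symm_apply, hc]
  intro m hm
  induction m, hm using Nat.le_induction with
  | base =>
      intro a ha
      have hd : (TensorProduct.rid ℂ (Matrix (Fin n) (Fin n) ℂ))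
          (phiSlice n B φ 1 (psiIter n B ψ 1 a)) ∈ D := by
        rw [hD]; exact ⟨a, ha, rfl⟩
      show _ ∈ LinearMap.range (TensorProduct.map D.subtype (diagPow n D 0).subtype)
      refine ⟨(⟨_, hd⟩ : D) ⊗ₜ[ℂ] (⟨(1:ℂ), trivial⟩ : (⊤ : Submodule ℂ ℂ)), ?_⟩
      refine (TensorProduct.map_tmul _ _ _ _).trans ?_
      show ((TensorProduct.rid ℂ (Matrix (Fin n) (Fin n) ℂ))
          (phiSlice n B φ 1 (psiIter n B ψ 1 a))) ⊗ₜ[ℂ] (1:ℂ) = _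
      rw [← TensorProduct.rid_symm_apply]
      exact LinearEquiv.symm_apply_apply (TensorProduct.rid ℂ (Matrix (Fin n) (Fin n) ℂ)) _
  | succ m hm ih =>
      intro a ha
      obtain ⟨k₀, rfl⟩ : ∃ k₀, m = k₀ + 1 := ⟨m - 1, (Nat.succ_pred_eq_of_pos hm).symm⟩
      have hg := phiPsi_succ n B ψ φ (k₀ + 1) a
      have hH1 : phiSlice n B φ (k₀ + 1 + 1) (psiIter n B ψ (k₀ + 1 + 1) a)
          ∈ LinearMap.range (TensorProduct.map
            (⊤ : Submodule ℂ (Matrix (Fin n) (Fin n) ℂ)).subtype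
            (diagPow n D (k₀ + 1)).subtype) := by
        rw [hg, ← sum_entrySlice n (ψ a), map_sum]
        apply Submodule.sum_mem
        intro k _
        rw [map_sum]
        apply Submodule.sum_mem
        intro l _
        rw [TensorProduct.map_tmul]
        refine ⟨(⟨Matrix.single k l 1, trivial⟩ :
            (⊤ : Submodule ℂ (Matrix (Fin n) (Fin n) ℂ))) ⊗ₜ[ℂ]
          ⟨phiSlice n B φ (k₀ + 1) (psiIter n B ψ (k₀ + 1) (entrySlice n k l (ψ a))),
            ih (entrySlice n k l (ψ a)) (hsliceA a ha k l)⟩, ?_⟩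
        rw [TensorProduct.map_tmul]
        rfl
      have hF : (phiSlice n B φ (k₀ + 1)) ∘ₗ (psiIter n B ψ (k₀ + 1)).toLinearMap
          = (TensorProduct.map LinearMap.id
              ((phiSlice n B φ k₀) ∘ₗ (psiIter n B ψ k₀).toLinearMap)) ∘ₗ ψ.toLinearMap :=
        LinearMap.ext fun b => phiPsi_succ n B ψ φ k₀ b
      have hg2 : phiSlice n B φ (k₀ + 1 + 1) (psiIter n B ψ (k₀ + 1 + 1) a)
          = TensorProduct.map LinearMap.id (TensorProduct.map LinearMap.id
              ((phiSlice n B φ k₀) ∘ₗ (psiIter n B ψ k₀).toLinearMap))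
            (psiTwo n B ψ a) := by
        rw [hg, hF, psiTwo_linear n B ψ a, ← LinearMap.comp_apply, ← TensorProduct.map_comp,
          LinearMap.id_comp]
        rfl
      have hH2 : phiSlice n B φ (k₀ + 1 + 1) (psiIter n B ψ (k₀ + 1 + 1) a)
          ∈ LinearMap.range (TensorProduct.map D.subtype
            (⊤ : Submodule ℂ (matTower n (k₀ + 1)).carrier).subtype) := by
        rw [hg2, ← sum_mslice n (psiTwo n B ψ a), map_sum]
        apply Submodule.sum_mem
        intro k _
        rw [map_sum]
        apply Submodule.sum_mem
        intro l _
        rw [ins_natural]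
        have hx : TensorProduct.map LinearMap.id
            ((phiSlice n B φ k₀) ∘ₗ (psiIter n B ψ k₀).toLinearMap)
              (mslice n k l (psiTwo n B ψ a))
            = phiSlice n B φ (k₀ + 1) (psiIter n B ψ (k₀ + 1)
                (ψ.symm (mslice n k l (psiTwo n B ψ a)))) := by
          rw [phiPsi_succ, AlgEquiv.apply_symm_apply]
        rw [hx]
        exact ins_mem_range D (diagPow n D k₀) _ _ (ih _ (hmsliceA a ha k l))
      exact inter_range_lemma D (diagPow n D (k₀ + 1))
        (phiSlice n B φ (k₀ + 1 + 1) (psiIter n B ψ (k₀ + 1 + 1) a)) hH2 hH1
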